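/- Let U be a unitary with [P,U] of finite rank, and let P' be another orthogonal projection such that P - P' has finite rank. Then Tr(U*PU - P) = Tr(U*P'U - P'). In particular, the index of a quantum walk does not depend on the position of the cut. -/
import Mathlib

/-- A continuous linear operator has finite rank if its range is finite dimensional. -/
def FiniteRankOp {H : Type*} [NormedAddCommGroup H] [InnerProductSpace ℂ H]
    (T : H →L[ℂ] H) : Prop :=
  FiniteDimensional ℂ (LinearMap.range (T : H →ₗ[ℂ] H))

/-- The trace of a finite-rank operator, computed as the trace of its compression to
its (finite-dimensional) range. -/
noncomputable def trFR {H : Type*} [NormedAddCommGroup H] [InnerProductSpace ℂ H]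
    (T : H →L[ℂ] H) : ℂ :=
  LinearMap.trace ℂ (LinearMap.range (T : H →ₗ[ℂ] H))
    ((T : H →ₗ[ℂ] H).restrict fun x _ => LinearMap.mem_range_self _ x)

section Aux

variable {H : Type*} [NormedAddCommGroup H] [InnerProductSpace ℂ H]

/-- Key lemma: the trace of `T` restricted to any finite-dimensional subspace containing
its range equals `trFR T`. -/
lemma trFR_eq_trace_on (T : H →L[ℂ] H) (V : Submodule ℂ H) [FiniteDimensional ℂ V]
    (h : LinearMap.range (T : H →ₗ[ℂ] H) ≤ V) :
    trFR T = LinearMap.trace ℂ V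
      ((T : H →ₗ[ℂ] H).restrict fun x _ => h (LinearMap.mem_range_self _ x)) := by
  set W := LinearMap.range (T : H →ₗ[ℂ] H) with hW
  haveI : FiniteDimensional ℂ W := Submodule.finiteDimensional_of_le h
  set f : V →ₗ[ℂ] W :=
    LinearMap.codRestrict W ((T : H →ₗ[ℂ] H).domRestrict V)
      (fun x => LinearMap.mem_range_self (T : H →ₗ[ℂ] H) x.1) with hf
  set g : W →ₗ[ℂ] V := Submodule.inclusion h with hg
  have h1 : (T : H →ₗ[ℂ] H).restrict
      (fun x (_ : x ∈ W) => LinearMap.mem_range_self (T : H →ₗ[ℂ] H) x) = f ∘ₗ g := by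
    ext x; rfl
  have h2 : (T : H →ₗ[ℂ] H).restrict
      (fun x (_ : x ∈ V) => h (LinearMap.mem_range_self (T : H →ₗ[ℂ] H) x)) = g ∘ₗ f := by
    ext x; rfl
  rw [trFR, h1, h2, LinearMap.trace_comp_comm']

lemma finiteRankOp_mul_left (A B : H →L[ℂ] H) (hA : FiniteRankOp A) :
    FiniteRankOp (A * B) := by
  have hle : LinearMap.range ((A * B : H →L[ℂ] H) : H →ₗ[ℂ] H)
      ≤ LinearMap.range (A : H →ₗ[ℂ] H) := by
    rintro x ⟨y, rfl⟩
    exact ⟨B y, rfl⟩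
  haveI : FiniteDimensional ℂ (LinearMap.range (A : H →ₗ[ℂ] H)) := hA
  exact Submodule.finiteDimensional_of_le hle

lemma finiteRankOp_mul_right (A B : H →L[ℂ] H) (hB : FiniteRankOp B) :
    FiniteRankOp (A * B) := by
  have h : LinearMap.range ((A * B : H →L[ℂ] H) : H →ₗ[ℂ] H)
      = (LinearMap.range (B : H →ₗ[ℂ] H)).map (A : H →ₗ[ℂ] H) := by
    rw [show ((A * B : H →L[ℂ] H) : H →ₗ[ℂ] H)
      = (A : H →ₗ[ℂ] H) ∘ₗ (B : H →ₗ[ℂ] H) from rfl, LinearMap.range_comp]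
  haveI : FiniteDimensional ℂ (LinearMap.range (B : H →ₗ[ℂ] H)) := hB
  rw [FiniteRankOp, h]
  infer_instance

lemma finiteRankOp_add (A B : H →L[ℂ] H) (hA : FiniteRankOp A) (hB : FiniteRankOp B) :
    FiniteRankOp (A + B) := by
  haveI : FiniteDimensional ℂ (LinearMap.range (A : H →ₗ[ℂ] H)) := hA
  haveI : FiniteDimensional ℂ (LinearMap.range (B : H →ₗ[ℂ] H)) := hB
  have h : LinearMap.range ((A + B : H →L[ℂ] H) : H →ₗ[ℂ] H)
      ≤ LinearMap.range (A : H →ₗ[ℂ] H) ⊔ LinearMap.range (B : H →ₗ[ℂ] H) := by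
    rintro x ⟨y, rfl⟩
    exact Submodule.add_mem_sup (LinearMap.mem_range_self _ y) (LinearMap.mem_range_self _ y)
  exact Submodule.finiteDimensional_of_le h

lemma finiteRankOp_neg (A : H →L[ℂ] H) (hA : FiniteRankOp A) : FiniteRankOp (-A) := by
  have h : LinearMap.range ((-A : H →L[ℂ] H) : H →ₗ[ℂ] H)
      ≤ LinearMap.range (A : H →ₗ[ℂ] H) := by
    rintro x ⟨y, rfl⟩
    exact ⟨-y, by simp⟩
  haveI : FiniteDimensional ℂ (LinearMap.range (A : H →ₗ[ℂ] H)) := hA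
  exact Submodule.finiteDimensional_of_le h

lemma trFR_add (A B : H →L[ℂ] H) (hA : FiniteRankOp A) (hB : FiniteRankOp B) :
    trFR (A + B) = trFR A + trFR B := by
  haveI : FiniteDimensional ℂ (LinearMap.range (A : H →ₗ[ℂ] H)) := hA
  haveI : FiniteDimensional ℂ (LinearMap.range (B : H →ₗ[ℂ] H)) := hB
  set V := LinearMap.range (A : H →ₗ[ℂ] H) ⊔ LinearMap.range (B : H →ₗ[ℂ] H) with hV
  have hAV : LinearMap.range (A : H →ₗ[ℂ] H) ≤ V := le_sup_left
  have hBV : LinearMap.range (B : H →ₗ[ℂ] H) ≤ V := le_sup_right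
  have hABV : LinearMap.range ((A + B : H →L[ℂ] H) : H →ₗ[ℂ] H) ≤ V := by
    rintro x ⟨y, rfl⟩
    exact Submodule.add_mem_sup (LinearMap.mem_range_self _ y) (LinearMap.mem_range_self _ y)
  rw [trFR_eq_trace_on (A + B) V hABV, trFR_eq_trace_on A V hAV, trFR_eq_trace_on B V hBV,
    ← map_add]
  congr 1

lemma trFR_neg (A : H →L[ℂ] H) (hA : FiniteRankOp A) : trFR (-A) = -trFR A := by
  haveI : FiniteDimensional ℂ (LinearMap.range (A : H →ₗ[ℂ] H)) := hA
  set V := LinearMap.range (A : H →ₗ[ℂ] H) with hV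
  have hNV : LinearMap.range ((-A : H →L[ℂ] H) : H →ₗ[ℂ] H) ≤ V := by
    rintro x ⟨y, rfl⟩
    exact ⟨-y, by simp⟩
  rw [trFR_eq_trace_on (-A) V hNV, trFR_eq_trace_on A V le_rfl, ← map_neg]
  congr 1

lemma trFR_comm (A B : H →L[ℂ] H) (hA : FiniteRankOp A) :
    trFR (A * B) = trFR (B * A) := by
  haveI : FiniteDimensional ℂ (LinearMap.range (A : H →ₗ[ℂ] H)) := hA
  set W := LinearMap.range (A : H →ₗ[ℂ] H) with hWdef
  set V := W.map (B : H →ₗ[ℂ] H) with hVdef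
  have hAB : LinearMap.range ((A * B : H →L[ℂ] H) : H →ₗ[ℂ] H) ≤ W := by
    rintro x ⟨y, rfl⟩; exact ⟨B y, rfl⟩
  have hBA : LinearMap.range ((B * A : H →L[ℂ] H) : H →ₗ[ℂ] H) ≤ V := by
    rintro x ⟨y, rfl⟩
    exact ⟨A y, LinearMap.mem_range_self _ y, rfl⟩
  set f : W →ₗ[ℂ] V :=
    LinearMap.codRestrict V ((B : H →ₗ[ℂ] H).domRestrict W)
      (fun x => Submodule.mem_map_of_mem x.2) with hf
  set g : V →ₗ[ℂ] W :=
    LinearMap.codRestrict W ((A : H →ₗ[ℂ] H).domRestrict V)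
      (fun x => LinearMap.mem_range_self (A : H →ₗ[ℂ] H) x.1) with hg
  have h1 : ((A * B : H →L[ℂ] H) : H →ₗ[ℂ] H).restrict
      (fun x (_ : x ∈ W) => hAB (LinearMap.mem_range_self _ x)) = g ∘ₗ f := by
    ext x; rfl
  have h2 : ((B * A : H →L[ℂ] H) : H →ₗ[ℂ] H).restrict
      (fun x (_ : x ∈ V) => hBA (LinearMap.mem_range_self _ x)) = f ∘ₗ g := by
    ext x; rfl
  rw [trFR_eq_trace_on (A * B) W hAB, trFR_eq_trace_on (B * A) V hBA, h1, h2,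
    LinearMap.trace_comp_comm']

lemma trFR_sub (A B : H →L[ℂ] H) (hA : FiniteRankOp A) (hB : FiniteRankOp B) :
    trFR (A - B) = trFR A - trFR B := by
  rw [sub_eq_add_neg, trFR_add A (-B) hA (finiteRankOp_neg B hB), trFR_neg B hB,
    sub_eq_add_neg]

end Aux

/-- The index of a quantum walk does not depend on the position of the cut:
if `P`, `P'` are orthogonal projections with `P - P'` of finite rank and `U` is a unitary
with `[P, U]` of finite rank, then `Tr(U* P U - P) = Tr(U* P' U - P')`. -/
theorem index_independent_of_cut
    {H : Type*} [NormedAddCommGroup H] [InnerProductSpace ℂ H] [CompleteSpace H]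
    (U P P' : H →L[ℂ] H) (hU : U ∈ unitary (H →L[ℂ] H))
    (hP_proj : P ∘L P = P) (hP_sa : IsSelfAdjoint P)
    (hP'_proj : P' ∘L P' = P') (hP'_sa : IsSelfAdjoint P')
    (hPP' : FiniteRankOp (P - P'))
    (hfin : FiniteRankOp (P * U - U * P)) :
    trFR (star U * P * U - P) = trFR (star U * P' * U - P') := by
  obtain ⟨hU1, hU2⟩ := hU
  set D := P - P' with hD
  set C := star U * D * U with hC
  have hCfr : FiniteRankOp C :=
    finiteRankOp_mul_left _ U (finiteRankOp_mul_right (star U) D hPP')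
  have hAfr : FiniteRankOp (star U * P * U - P) := by
    have e : star U * P * U - P = star U * (P * U - U * P) := by
      rw [mul_sub, ← mul_assoc, ← mul_assoc, hU1, one_mul]
    rw [e]
    exact finiteRankOp_mul_right (star U) _ hfin
  have hCD : FiniteRankOp (C - D) := by
    rw [sub_eq_add_neg]
    exact finiteRankOp_add C (-D) hCfr (finiteRankOp_neg D hPP')
  have hBfr : FiniteRankOp (star U * P' * U - P') := by
    have e : star U * P' * U - P' = (star U * P * U - P) - (C - D) := by
      rw [hC, hD]; noncomm_ring
    rw [e, sub_eq_add_neg]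
    exact finiteRankOp_add _ _ hAfr (finiteRankOp_neg _ hCD)
  have eA : star U * P * U - P = (star U * P' * U - P') + (C - D) := by
    rw [hC, hD]; noncomm_ring
  have hCeqD : trFR C = trFR D := by
    have : C = (star U * D) * U := by rw [hC]
    rw [this, trFR_comm (star U * D) U (finiteRankOp_mul_right (star U) D hPP'),
      ← mul_assoc, hU2, one_mul]
  rw [eA, trFR_add _ _ hBfr hCD, trFR_sub C D hCfr hPP', hCeqD]
  ring
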